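/- Let Ω be a nonempty compact metric space equipped with a continuous action of ℝⁿ, written (v, T) ↦ T − v. Let f be a continuous eigenfunction with eigenvalue β and g a continuous eigenfunction with eigenvalue β′, where β and β′ are linear functionals on ℝⁿ. If β ≠ β′, then f and g are not homotopic as maps Ω → S¹. (This expresses injectivity of the map θ from the group of eigenvalues to the first cohomology of Ω.) -/

import Mathlib

open unitInterval in
lemma circle_slit {u : Circle} (h : (u : ℂ) ≠ -1) : (u : ℂ) ∈ Complex.slitPlane := by
  rw [Complex.mem_slitPlane_iff]
  by_contra hc
  push_neg at hc
  obtain ⟨h1, h2⟩ := hc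
  apply h
  have habs : ‖(u : ℂ)‖ = 1 := Circle.norm_coe u
  have hsq : (u : ℂ).re ^ 2 + (u : ℂ).im ^ 2 = 1 := by
    have := Complex.sq_norm (u : ℂ)
    rw [habs] at this
    simpa [Complex.normSq_apply, sq] using this.symm
  have hre : (u : ℂ).re = -1 := by nlinarith
  apply Complex.ext <;> simp [hre, h2]

lemma circle_homotopy_lift {Ω : Type*} [MetricSpace Ω] [CompactSpace Ω]
    (f g : C(Ω, Circle)) (F : f.Homotopy g) :
    ∃ (φ : Ω → ℝ) (B : ℝ), Continuous φ ∧ (∀ x, |φ x| ≤ B) ∧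
      ∀ x, Complex.exp ((φ x : ℂ) * Complex.I) = (g x : ℂ) * ((f x : ℂ))⁻¹ := by
  classical
  set I01 := unitInterval
  -- the bad set
  set S : Set ((I01 × I01) × Ω) := {q | (F (q.1.1, q.2) : ℂ) = -(F (q.1.2, q.2) : ℂ)} with hSdef
  have hc1 : Continuous fun q : (I01 × I01) × Ω => (F (q.1.1, q.2) : ℂ) :=
    continuous_subtype_val.comp (F.continuous.comp ((continuous_fst.fst).prodMk continuous_snd))
  have hc2 : Continuous fun q : (I01 × I01) × Ω => -(F (q.1.2, q.2) : ℂ) :=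
    (continuous_subtype_val.comp
      (F.continuous.comp ((continuous_fst.snd).prodMk continuous_snd))).neg
  have hS_closed : IsClosed S := isClosed_eq hc1 hc2
  have hS_cpt : IsCompact S := hS_closed.isCompact
  obtain ⟨δ, hδpos, hδ⟩ : ∃ δ > 0, ∀ (s t : I01) (x : Ω),
      |(s : ℝ) - (t : ℝ)| < δ → (F (s, x) : ℂ) ≠ -(F (t, x) : ℂ) := by
    rcases S.eq_empty_or_nonempty with hS | hS
    · exact ⟨1, one_pos, fun s t x _ h =>
        Set.eq_empty_iff_forall_notMem.1 hS ((s, t), x) h⟩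
    · have hdc : ContinuousOn (fun q : (I01 × I01) × Ω => |(q.1.1 : ℝ) - (q.1.2 : ℝ)|) S :=
        (((continuous_subtype_val.comp continuous_fst.fst).sub
          (continuous_subtype_val.comp continuous_fst.snd)).abs).continuousOn
      obtain ⟨q₀, hq₀, hmin⟩ := hS_cpt.exists_isMinOn hS hdc
      refine ⟨|(q₀.1.1 : ℝ) - (q₀.1.2 : ℝ)|, ?_, ?_⟩
      · rcases (abs_nonneg ((q₀.1.1 : ℝ) - (q₀.1.2 : ℝ))).lt_or_eq with h | h
        · exact h
        · exfalso
          have h0 : (q₀.1.1 : ℝ) - (q₀.1.2 : ℝ) = 0 := abs_eq_zero.1 h.symm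
          have : q₀.1.1 = q₀.1.2 := Subtype.ext (by linarith)
          have hq : (F (q₀.1.1, q₀.2) : ℂ) = -(F (q₀.1.1, q₀.2) : ℂ) := by
            have hq' := hq₀
            simp only [hSdef, Set.mem_setOf_eq] at hq'
            rwa [← this] at hq'
          have : (F (q₀.1.1, q₀.2) : ℂ) = 0 := by linear_combination hq / 2
          exact Circle.coe_ne_zero _ this
      · intro s t x hlt h
        exact absurd (isMinOn_iff.mp hmin ((s, t), x) h) (not_le.2 hlt)
  -- choose N
  obtain ⟨N, hN⟩ := exists_nat_gt (1 / δ)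
  have hNpos : (0 : ℝ) < N := lt_trans (by positivity) hN
  have hNne : (N : ℝ) ≠ 0 := ne_of_gt hNpos
  have hstep : (1 : ℝ) / N < δ := by
    rw [div_lt_iff₀ hNpos]
    calc (1 : ℝ) = δ * (1 / δ) := by field_simp
    _ < δ * N := by exact mul_lt_mul_of_pos_left hN hδpos
  -- the subdivision
  set τ : ℕ → I01 := fun i => Set.projIcc (0 : ℝ) 1 zero_le_one ((i : ℝ) / N) with hτ
  set w : ℕ → Ω → Circle := fun i x => F (τ i, x) with hw
  have hτdist : ∀ i : ℕ, |((τ (i + 1) : ℝ)) - (τ i : ℝ)| < δ := by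
    intro i
    have hlip := (LipschitzWith.projIcc (zero_le_one (α := ℝ))).dist_le_mul
      (((i : ℝ) + 1) / N) ((i : ℝ) / N)
    have h1 : |((τ (i + 1) : ℝ)) - (τ i : ℝ)| = dist (τ (i + 1)) (τ i) := by
      rw [Subtype.dist_eq, Real.dist_eq]
    have h2 : dist (((i : ℝ) + 1) / N) ((i : ℝ) / N) = 1 / N := by
      rw [Real.dist_eq, div_sub_div_same]
      norm_num
    calc |((τ (i + 1) : ℝ)) - (τ i : ℝ)| = dist (τ (i + 1)) (τ i) := h1
      _ ≤ 1 * dist (((i : ℝ) + 1) / N) ((i : ℝ) / N) := by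
          simpa [hτ] using hlip
      _ = 1 / N := by rw [one_mul, h2]
      _ < δ := hstep
  have hnb : ∀ (i : ℕ) (x : Ω), (w (i + 1) x : ℂ) ≠ -(w i x : ℂ) := fun i x =>
    hδ (τ (i + 1)) (τ i) x (hτdist i)
  have hratio_ne : ∀ (i : ℕ) (x : Ω), ((w (i + 1) x * (w i x)⁻¹ : Circle) : ℂ) ≠ -1 := by
    intro i x h
    apply hnb i x
    have : (w (i + 1) x : ℂ) * ((w i x : ℂ))⁻¹ = -1 := by
      simpa using h
    field_simp at this
    simpa using this
  have hslit : ∀ (i : ℕ) (x : Ω),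
      ((w (i + 1) x * (w i x)⁻¹ : Circle) : ℂ) ∈ Complex.slitPlane := fun i x =>
    circle_slit (hratio_ne i x)
  -- the lift
  set a : ℕ → Ω → ℝ := fun i x => Complex.arg ((w (i + 1) x * (w i x)⁻¹ : Circle) : ℂ) with ha
  refine ⟨fun x => ∑ i ∈ Finset.range N, a i x, N * Real.pi, ?_, ?_, ?_⟩
  · apply continuous_finset_sum
    intro i _
    rw [continuous_iff_continuousAt]
    intro x
    have hwc : ∀ j : ℕ, Continuous fun y : Ω => w j y :=
      fun j => F.continuous.comp (continuous_const.prodMk continuous_id)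
    have hcr : Continuous fun y : Ω => ((w (i + 1) y * (w i y)⁻¹ : Circle) : ℂ) :=
      continuous_subtype_val.comp ((hwc (i + 1)).mul (hwc i).inv)
    exact ContinuousAt.comp (f := fun y : Ω => ((w (i + 1) y * (w i y)⁻¹ : Circle) : ℂ))
      (Complex.continuousAt_arg (hslit i x)) hcr.continuousAt
  · intro x
    calc |∑ i ∈ Finset.range N, a i x| ≤ ∑ i ∈ Finset.range N, |a i x| :=
        Finset.abs_sum_le_sum_abs _ _
      _ ≤ ∑ _i ∈ Finset.range N, Real.pi :=
        Finset.sum_le_sum fun i _ => Complex.abs_arg_le_pi _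
      _ = N * Real.pi := by simp [Finset.sum_const, nsmul_eq_mul]
  · intro x
    have hsum : ((∑ i ∈ Finset.range N, a i x : ℝ) : ℂ) * Complex.I
        = ∑ i ∈ Finset.range N, ((a i x : ℝ) : ℂ) * Complex.I := by
      push_cast
      rw [Finset.sum_mul]
    rw [hsum, Complex.exp_sum]
    have hterm : ∀ i ∈ Finset.range N,
        Complex.exp (((a i x : ℝ) : ℂ) * Complex.I)
          = ((w (i + 1) x * (w i x)⁻¹ : Circle) : ℂ) := by
      intro i _
      have := Circle.exp_arg (w (i + 1) x * (w i x)⁻¹)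
      calc Complex.exp (((a i x : ℝ) : ℂ) * Complex.I)
          = (Circle.exp (a i x) : ℂ) := (Circle.coe_exp _).symm
        _ = ((w (i + 1) x * (w i x)⁻¹ : Circle) : ℂ) := by
            simp only [ha]
            exact congrArg (fun z : Circle => (z : ℂ)) this
    rw [Finset.prod_congr rfl hterm]
    have hτ0 : τ 0 = 0 := Subtype.ext (by norm_num [hτ, Set.coe_projIcc])
    have hτN : τ N = 1 := Subtype.ext (by norm_num [hτ, Set.coe_projIcc, div_self hNne])
    have hwN : w N x = g x := by rw [hw]; simp only [hτN]; exact F.apply_one x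
    have hw0 : w 0 x = f x := by rw [hw]; simp only [hτ0]; exact F.apply_zero x
    have hprod : (∏ i ∈ Finset.range N, (w (i + 1) x * (w i x)⁻¹)) = g x / f x := by
      rw [Finset.prod_congr rfl fun i _ => (div_eq_mul_inv (w (i + 1) x) (w i x)).symm,
        Finset.prod_range_div (fun i => w i x), hwN, hw0]
    rw [show (∏ i ∈ Finset.range N, ((w (i + 1) x * (w i x)⁻¹ : Circle) : ℂ)) = ((∏ i ∈ Finset.range N, (w (i + 1) x * (w i x)⁻¹) : Circle) : ℂ) from (map_prod Circle.coeHom (fun i => w (i + 1) x * (w i x)⁻¹) (Finset.range N)).symm, hprod]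
    push_cast
    rw [div_eq_mul_inv]

theorem stmt3 {Ω : Type*} [MetricSpace Ω] [CompactSpace Ω] [Nonempty Ω] (n : ℕ)
    (act : (Fin n → ℝ) → Ω → Ω)
    (hact_cont : Continuous fun p : (Fin n → ℝ) × Ω => act p.1 p.2)
    (hact_zero : ∀ T, act 0 T = T)
    (hact_add : ∀ v w T, act (v + w) T = act v (act w T))
    (β β' : (Fin n → ℝ) →ₗ[ℝ] ℝ) (f g : C(Ω, Circle))
    (hf : ∀ (T : Ω) (v : Fin n → ℝ),
      (f (act v T) : ℂ) = Complex.exp (2 * Real.pi * Complex.I * (β v : ℝ)) * (f T : ℂ))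
    (hg : ∀ (T : Ω) (v : Fin n → ℝ),
      (g (act v T) : ℂ) = Complex.exp (2 * Real.pi * Complex.I * (β' v : ℝ)) * (g T : ℂ))
    (hne : β ≠ β') :
    ¬ f.Homotopic g := by
  rintro ⟨F⟩
  obtain ⟨φ, B, hφc, hφB, hφ⟩ := circle_homotopy_lift f g F
  -- pick a direction where the eigenvalues differ
  obtain ⟨v₀, hv₀⟩ : ∃ v, β v ≠ β' v := by
    by_contra h
    push_neg at h
    exact hne (LinearMap.ext h)
  set c : ℝ := β' v₀ - β v₀ with hc
  have hcne : c ≠ 0 := sub_ne_zero.2 (Ne.symm hv₀)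
  set T₀ : Ω := Classical.arbitrary Ω with hT₀
  set ρ : ℝ → Ω := fun t => act (t • v₀) T₀ with hρ
  have hρc : Continuous ρ :=
    hact_cont.comp ((continuous_id.smul continuous_const).prodMk continuous_const)
  have hρ0 : ρ 0 = T₀ := by rw [hρ]; simp [hact_zero]
  set ψ : ℝ → ℝ := fun t => φ (ρ t) with hψdef
  have hψc : Continuous ψ := hφc.comp hρc
  have hψB : ∀ t, |ψ t| ≤ B := fun t => hφB (ρ t)
  -- the key functional equation
  have hfg : ∀ t : ℝ, Complex.exp ((ψ t : ℂ) * Complex.I)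
      = Complex.exp (((ψ 0 + 2 * Real.pi * t * c : ℝ) : ℂ) * Complex.I) := by
    intro t
    have h1 : Complex.exp ((ψ t : ℂ) * Complex.I) = (g (ρ t) : ℂ) * ((f (ρ t) : ℂ))⁻¹ := hφ _
    have h2 : Complex.exp ((ψ 0 : ℂ) * Complex.I) = (g T₀ : ℂ) * ((f T₀ : ℂ))⁻¹ := by
      rw [hψdef]; simp only [hρ0]; exact hφ T₀
    have hfv := hf T₀ (t • v₀)
    have hgv := hg T₀ (t • v₀)
    rw [map_smul, smul_eq_mul] at hfv hgv
    calc Complex.exp ((ψ t : ℂ) * Complex.I)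
        = (g (ρ t) : ℂ) * ((f (ρ t) : ℂ))⁻¹ := h1
      _ = (Complex.exp (2 * Real.pi * Complex.I * ((t * β' v₀ : ℝ) : ℂ)) * (g T₀ : ℂ))
          * (Complex.exp (2 * Real.pi * Complex.I * ((t * β v₀ : ℝ) : ℂ)) * (f T₀ : ℂ))⁻¹ := by
          simp only [hρ]
          rw [hgv, hfv]
      _ = Complex.exp (2 * Real.pi * Complex.I * ((t * β' v₀ : ℝ) : ℂ)
            - 2 * Real.pi * Complex.I * ((t * β v₀ : ℝ) : ℂ))
          * ((g T₀ : ℂ) * ((f T₀ : ℂ))⁻¹) := by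
          rw [Complex.exp_sub]
          have h3 : Complex.exp (2 * Real.pi * Complex.I * ((t * β v₀ : ℝ) : ℂ)) ≠ 0 :=
            Complex.exp_ne_zero _
          have h4 : (f T₀ : ℂ) ≠ 0 := Circle.coe_ne_zero _
          field_simp
      _ = Complex.exp (((2 * Real.pi * t * c : ℝ) : ℂ) * Complex.I)
          * ((g T₀ : ℂ) * ((f T₀ : ℂ))⁻¹) := by
          congr 1
          rw [hc]
          push_cast
          ring
      _ = Complex.exp (((ψ 0 + 2 * Real.pi * t * c : ℝ) : ℂ) * Complex.I) := by
          rw [show (((ψ 0 + 2 * Real.pi * t * c : ℝ) : ℂ)) * Complex.I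
              = ((2 * Real.pi * t * c : ℝ) : ℂ) * Complex.I + ((ψ 0 : ℝ) : ℂ) * Complex.I by
            push_cast; ring, Complex.exp_add, h2]
  -- hence ψ t − ψ 0 − 2πtc is an integer multiple of 2π
  have hint : ∀ t : ℝ, ∃ m : ℤ, (ψ t - ψ 0 - 2 * Real.pi * t * c) / (2 * Real.pi) = m := by
    intro t
    have h := hfg t
    rw [Complex.exp_eq_exp_iff_exists_int] at h
    obtain ⟨m, hm⟩ := h
    refine ⟨m, ?_⟩
    have hI : ((ψ t : ℝ) : ℂ) = ((ψ 0 + 2 * Real.pi * t * c : ℝ) : ℂ) + m * (2 * Real.pi) := by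
      have := hm
      have h2 : (((ψ t : ℝ) : ℂ)) * Complex.I
          = (((ψ 0 + 2 * Real.pi * t * c : ℝ) : ℂ) + (m : ℂ) * (2 * Real.pi)) * Complex.I := by
        rw [this]; push_cast; ring
      exact mul_right_cancel₀ Complex.I_ne_zero h2
    have hR : ψ t = ψ 0 + 2 * Real.pi * t * c + m * (2 * Real.pi) := by
      have : (((ψ t : ℝ)) : ℂ) = (((ψ 0 + 2 * Real.pi * t * c + m * (2 * Real.pi) : ℝ)) : ℂ) := by
        rw [hI]; push_cast; ring
      exact_mod_cast this
    have hπ : (2 * Real.pi) ≠ 0 := by positivity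
    field_simp [hR]
    rw [hR]; ring
  -- the integer-valued continuous function is identically 0
  set χ : ℝ → ℝ := fun t => (ψ t - ψ 0 - 2 * Real.pi * t * c) / (2 * Real.pi) with hχdef
  have hχc : Continuous χ := by
    apply Continuous.div_const
    exact (hψc.sub continuous_const).sub (by continuity)
  have hχ0 : χ 0 = 0 := by simp [hχdef]
  have hχ : ∀ t, χ t = 0 := by
    intro t
    obtain ⟨m, hm⟩ := hint t
    rcases eq_or_ne m 0 with h | h
    · show (ψ t - ψ 0 - 2 * Real.pi * t * c) / (2 * Real.pi) = 0
      rw [hm, h]; norm_num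
    · exfalso
      have h1 : (1 : ℝ) ≤ |(m : ℝ)| := by exact_mod_cast Int.one_le_abs h
      set y : ℝ := if (0 : ℝ) ≤ (m : ℝ) then 1/2 else -(1/2) with hy
      have hχt : χ t = (m : ℝ) := hm
      have hymem : y ∈ Set.uIcc (χ 0) (χ t) := by
        rw [hχ0, hχt, Set.mem_uIcc]
        rcases le_or_gt 0 ((m : ℝ)) with hm0 | hm0
        · left
          have : (1 : ℝ) ≤ (m : ℝ) := by rwa [abs_of_nonneg hm0] at h1
          constructor <;> simp [hy, hm0] <;> linarith
        · right
          have : (m : ℝ) ≤ -1 := by rw [abs_of_neg hm0] at h1; linarith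
          constructor <;> simp [hy, not_le.2 hm0] <;> linarith
      have := intermediate_value_uIcc (a := (0:ℝ)) (b := t) (f := χ) hχc.continuousOn
      obtain ⟨s, _, hs⟩ := this hymem
      obtain ⟨m', hm'⟩ := hint s
      have hs' : (ψ s - ψ 0 - 2 * Real.pi * s * c) / (2 * Real.pi) = y := hs
      have : (m' : ℝ) = y := by rw [← hm']; exact hs'
      have hy2 : |y| = 1/2 := by
        rcases le_or_gt 0 ((m : ℝ)) with hm0 | hm0 <;> simp [hy, hm0, abs_of_nonneg, not_le.2, abs_of_neg] <;> norm_num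
      rcases eq_or_ne m' 0 with h0 | h0
      · rw [h0] at this; simp at this
        rw [← this] at hy2; simp at hy2
      · have : (1 : ℝ) ≤ |y| := by
          rw [← this]; exact_mod_cast Int.one_le_abs h0
        rw [hy2] at this; linarith
  -- contradiction with boundedness
  have hlin : ∀ t, ψ t = ψ 0 + 2 * Real.pi * t * c := by
    intro t
    have h0 : (ψ t - ψ 0 - 2 * Real.pi * t * c) / (2 * Real.pi) = 0 := hχ t
    have hπ : (2 * Real.pi) ≠ 0 := by positivity
    have := (div_eq_zero_iff.mp h0).resolve_right hπ
    linarith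
  have hB0 : 0 ≤ B := le_trans (abs_nonneg _) (hψB 0)
  set t₀ : ℝ := (2 * B + 1) / (2 * Real.pi * c) with ht₀
  have h2πc : 2 * Real.pi * c ≠ 0 := by
    have : Real.pi ≠ 0 := Real.pi_ne_zero
    simp [this, hcne]
  have hval : 2 * Real.pi * t₀ * c = 2 * B + 1 := by
    rw [ht₀]; field_simp
  have := hlin t₀
  rw [hval] at this
  have h1 : |ψ t₀ - ψ 0| ≤ 2 * B := by
    have := hψB t₀
    have := hψB 0
    calc |ψ t₀ - ψ 0| ≤ |ψ t₀| + |ψ 0| := abs_sub _ _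
      _ ≤ B + B := add_le_add (hψB t₀) (hψB 0)
      _ = 2 * B := by ring
  rw [this] at h1
  have : |ψ 0 + (2 * B + 1) - ψ 0| = 2 * B + 1 := by
    rw [show ψ 0 + (2 * B + 1) - ψ 0 = 2 * B + 1 by ring]
    exact abs_of_pos (by linarith)
  rw [this] at h1
  linarith
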